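/- Let c = (i₁ i₂ … i_k) ∈ S_n be a k-cycle on distinct indices i₁, …, i_k ∈ Fin n, let σ = (0, c) ∈ B_n, and let τ = (e_{i₁} + ⋯ + e_{i_k}, 1) ∈ B_n. Then σ and τ commute and φ(σ, τ) = ε̂^(k−1). -/

import Mathlib

open Finset Equiv

/-- `Qf n a b = ∑_{i < j} a i * b j`. -/
def Qf (n : ℕ) (a b : Fin n → ZMod 2) : ZMod 2 :=
  ∑ p ∈ Finset.univ.filter (fun p : Fin n × Fin n => p.1 < p.2), a p.1 * b p.2

/-- The underlying set of the group `H n`: pairs `(a, b)` with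
`a : Fin n → ZMod 2` and `b : ZMod 2`. -/
@[ext] structure H (n : ℕ) where
  a : Fin n → ZMod 2
  b : ZMod 2

namespace H

variable {n : ℕ}

instance : Mul (H n) := ⟨fun x y => ⟨x.a + y.a, x.b + y.b + Qf n x.a y.a⟩⟩
instance : One (H n) := ⟨⟨0, 0⟩⟩
instance : Inv (H n) := ⟨fun x => ⟨x.a, x.b + Qf n x.a x.a⟩⟩

@[simp] lemma mul_a (x y : H n) : (x * y).a = x.a + y.a := rfl
@[simp] lemma mul_b (x y : H n) : (x * y).b = x.b + y.b + Qf n x.a y.a := rfl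
@[simp] lemma one_a : (1 : H n).a = 0 := rfl
@[simp] lemma one_b : (1 : H n).b = 0 := rfl
@[simp] lemma inv_a (x : H n) : (x⁻¹).a = x.a := rfl
@[simp] lemma inv_b (x : H n) : (x⁻¹).b = x.b + Qf n x.a x.a := rfl

lemma Qf_add_left (a a' b : Fin n → ZMod 2) :
    Qf n (a + a') b = Qf n a b + Qf n a' b := by
  simp [Qf, add_mul, Finset.sum_add_distrib]

lemma Qf_add_right (a b b' : Fin n → ZMod 2) :
    Qf n a (b + b') = Qf n a b + Qf n a b' := by
  simp [Qf, mul_add, Finset.sum_add_distrib]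

@[simp] lemma Qf_zero_left (b : Fin n → ZMod 2) : Qf n 0 b = 0 := by simp [Qf]
@[simp] lemma Qf_zero_right (a : Fin n → ZMod 2) : Qf n a 0 = 0 := by simp [Qf]

instance : Group (H n) where
  mul_assoc x y z := by
    ext i
    · simp [add_assoc]
    · simp only [mul_b, mul_a, Qf_add_left, Qf_add_right]
      ring
  one_mul x := by ext i <;> simp
  mul_one x := by ext i <;> simp
  inv_mul_cancel x := by
    ext i
    · show x.a i + x.a i = 0
      generalize x.a i = u; revert u; decide
    · show x.b + Qf n x.a x.a + x.b + Qf n x.a x.a = 0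
      generalize x.b = u; generalize Qf n x.a x.a = q
      revert u q; decide

end H

/-- The generator `x_i = (e_i, 0)` of `H n`. -/
def xgen (n : ℕ) (i : Fin n) : H n := ⟨Pi.single i 1, 0⟩

/-- The central element `ε = (0, 1)` of `H n`. -/
def eps (n : ℕ) : H n := ⟨0, 1⟩

/-- `Rf n σ a = ∑_{i < j, σ i > σ j} a i * a j`. -/
def Rf (n : ℕ) (σ : Equiv.Perm (Fin n)) (a : Fin n → ZMod 2) : ZMod 2 :=
  ∑ p ∈ Finset.univ.filter
      (fun p : Fin n × Fin n => p.1 < p.2 ∧ σ p.2 < σ p.1), a p.1 * a p.2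

/-- The action of `σ ∈ Sₙ` on `H n`:
`σ · (a, b) = (a ∘ σ⁻¹, b + ∑_{i<j, σ i > σ j} a i * a j)`. -/
def actH (n : ℕ) (σ : Equiv.Perm (Fin n)) (g : H n) : H n :=
  ⟨g.a ∘ σ.symm, g.b + Rf n σ g.a⟩

section Lemmas

open Finset Equiv

variable {n : ℕ}

private lemma two_cancel : ∀ x : ZMod 2, x + x = 0 := by decide

/-- Reindexing a pair-sum by a permutation acting diagonally. -/
private lemma sum_pair_perm (τ : Equiv.Perm (Fin n)) (c : Fin n × Fin n → Prop)
    [DecidablePred c] (f : Fin n → Fin n → ZMod 2) :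
    ∑ p ∈ Finset.univ.filter (fun p : Fin n × Fin n => c (τ p.1, τ p.2)), f (τ p.1) (τ p.2)
      = ∑ p ∈ Finset.univ.filter c, f p.1 p.2 := by
  apply Finset.sum_equiv (Equiv.prodCongr τ τ) <;> simp

/-- Reindexing a pair-sum by the swap. -/
private lemma sum_pair_swap (c : Fin n × Fin n → Prop)
    [DecidablePred c] (f : Fin n → Fin n → ZMod 2) :
    ∑ p ∈ Finset.univ.filter c, f p.1 p.2
      = ∑ p ∈ Finset.univ.filter (fun p : Fin n × Fin n => c (p.2, p.1)), f p.2 p.1 := by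
  apply Finset.sum_equiv (Equiv.prodComm (Fin n) (Fin n)) <;> simp

end Lemmas

section Lemmas2

open Finset Equiv

variable {n : ℕ}

private lemma flip_lt {x y : Fin n} (hne : x ≠ y) : ¬ x < y ↔ y < x :=
  ⟨fun h => lt_of_le_of_ne (not_lt.mp h) hne.symm, fun h h' => absurd h' (asymm h)⟩

private lemma Rf_add (σ : Equiv.Perm (Fin n)) (a b : Fin n → ZMod 2) :
    Rf n σ (a + b) = Rf n σ a + Rf n σ b
      + ∑ p ∈ Finset.univ.filter (fun p : Fin n × Fin n => p.1 < p.2 ∧ σ p.2 < σ p.1),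
          (a p.1 * b p.2 + b p.1 * a p.2) := by
  simp only [Rf, ← Finset.sum_add_distrib]
  apply Finset.sum_congr rfl
  intro p _
  simp only [Pi.add_apply]
  ring

private lemma Qf_act (σ : Equiv.Perm (Fin n)) (a b : Fin n → ZMod 2) :
    Qf n (a ∘ σ.symm) (b ∘ σ.symm)
      = Qf n a b
        + ∑ p ∈ Finset.univ.filter (fun p : Fin n × Fin n => p.1 < p.2 ∧ σ p.2 < σ p.1),
            (a p.1 * b p.2 + b p.1 * a p.2) := by
  classical
  have h1 : Qf n (a ∘ σ.symm) (b ∘ σ.symm)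
      = ∑ p ∈ Finset.univ.filter (fun p : Fin n × Fin n => σ p.1 < σ p.2),
          a p.1 * b p.2 := by
    rw [Qf]
    apply Finset.sum_equiv (Equiv.prodCongr σ.symm σ.symm) <;> simp
  have h2 : ∑ p ∈ Finset.univ.filter (fun p : Fin n × Fin n => σ p.1 < σ p.2), a p.1 * b p.2
      = ∑ p ∈ Finset.univ.filter
            (fun p : Fin n × Fin n => σ p.1 < σ p.2 ∧ p.1 < p.2), a p.1 * b p.2
        + ∑ p ∈ Finset.univ.filter
            (fun p : Fin n × Fin n => σ p.1 < σ p.2 ∧ p.2 < p.1), a p.1 * b p.2 := by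
    rw [← Finset.sum_filter_add_sum_filter_not
      (Finset.univ.filter (fun p : Fin n × Fin n => σ p.1 < σ p.2))
      (fun p : Fin n × Fin n => p.1 < p.2)]
    congr 1
    · rw [Finset.filter_filter]
    · rw [Finset.filter_filter]
      refine Finset.sum_congr (Finset.filter_congr ?_) (fun _ _ => rfl)
      intro p _
      constructor
      · rintro ⟨h1', h2'⟩
        have hne : p.1 ≠ p.2 := fun h => absurd (h ▸ h1' : σ p.1 < σ p.1) (lt_irrefl _)
        exact ⟨h1', (flip_lt hne).mp h2'⟩
      · rintro ⟨h1', h2'⟩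
        exact ⟨h1', fun h => absurd h (asymm h2')⟩
  have h3 : ∑ p ∈ Finset.univ.filter
        (fun p : Fin n × Fin n => σ p.1 < σ p.2 ∧ p.2 < p.1), a p.1 * b p.2
      = ∑ p ∈ Finset.univ.filter
            (fun p : Fin n × Fin n => p.1 < p.2 ∧ σ p.2 < σ p.1), b p.1 * a p.2 := by
    rw [sum_pair_swap (fun p : Fin n × Fin n => σ p.1 < σ p.2 ∧ p.2 < p.1)
      (fun i j => a i * b j)]
    refine Finset.sum_congr (Finset.filter_congr ?_) ?_
    · intro p _
      exact ⟨fun h => ⟨h.2, h.1⟩, fun h => ⟨h.2, h.1⟩⟩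
    · intro p _; ring
  have h4 : Qf n a b
      = ∑ p ∈ Finset.univ.filter
            (fun p : Fin n × Fin n => σ p.1 < σ p.2 ∧ p.1 < p.2), a p.1 * b p.2
        + ∑ p ∈ Finset.univ.filter
            (fun p : Fin n × Fin n => p.1 < p.2 ∧ σ p.2 < σ p.1), a p.1 * b p.2 := by
    rw [Qf, ← Finset.sum_filter_add_sum_filter_not
      (Finset.univ.filter (fun p : Fin n × Fin n => p.1 < p.2))
      (fun p : Fin n × Fin n => σ p.1 < σ p.2)]
    congr 1
    · rw [Finset.filter_filter]
      refine Finset.sum_congr (Finset.filter_congr ?_) (fun _ _ => rfl)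
      intro p _
      exact ⟨fun h => ⟨h.2, h.1⟩, fun h => ⟨h.2, h.1⟩⟩
    · rw [Finset.filter_filter]
      refine Finset.sum_congr (Finset.filter_congr ?_) (fun _ _ => rfl)
      intro p _
      constructor
      · rintro ⟨h1', h2'⟩
        have hne : σ p.1 ≠ σ p.2 := fun h =>
          absurd h1' (by rw [σ.injective h]; exact lt_irrefl _)
        exact ⟨h1', (flip_lt hne).mp h2'⟩
      · rintro ⟨h1', h2'⟩
        exact ⟨h1', fun h => absurd h (asymm h2')⟩
  have h5 : ∑ p ∈ Finset.univ.filter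
        (fun p : Fin n × Fin n => p.1 < p.2 ∧ σ p.2 < σ p.1),
          (a p.1 * b p.2 + b p.1 * a p.2)
      = ∑ p ∈ Finset.univ.filter
            (fun p : Fin n × Fin n => p.1 < p.2 ∧ σ p.2 < σ p.1), a p.1 * b p.2
        + ∑ p ∈ Finset.univ.filter
            (fun p : Fin n × Fin n => p.1 < p.2 ∧ σ p.2 < σ p.1), b p.1 * a p.2 :=
    Finset.sum_add_distrib
  rw [h1, h2, h3, h4, h5]
  have h6 := two_cancel (∑ p ∈ Finset.univ.filter
      (fun p : Fin n × Fin n => p.1 < p.2 ∧ σ p.2 < σ p.1), a p.1 * b p.2)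
  linear_combination -h6

end Lemmas2

section Lemmas3

open Finset Equiv

variable {n : ℕ}

private lemma Rf_comp (σ τ : Equiv.Perm (Fin n)) (a : Fin n → ZMod 2) :
    Rf n (σ * τ) a = Rf n τ a + Rf n σ (a ∘ τ.symm) := by
  classical
  -- rewrite `Rf (σ * τ)`
  have hA : Rf n (σ * τ) a
      = ∑ p ∈ Finset.univ.filter
          (fun p : Fin n × Fin n => p.1 < p.2 ∧ σ (τ p.2) < σ (τ p.1)), a p.1 * a p.2 := by
    rw [Rf]
    refine Finset.sum_congr (Finset.filter_congr ?_) (fun _ _ => rfl)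
    intro p _
    simp [Equiv.Perm.mul_apply]
  -- split it according to the relative order of `τ p.1`, `τ p.2`
  have hB : ∑ p ∈ Finset.univ.filter
        (fun p : Fin n × Fin n => p.1 < p.2 ∧ σ (τ p.2) < σ (τ p.1)), a p.1 * a p.2
      = ∑ p ∈ Finset.univ.filter
            (fun p : Fin n × Fin n =>
              (p.1 < p.2 ∧ σ (τ p.2) < σ (τ p.1)) ∧ τ p.1 < τ p.2), a p.1 * a p.2
        + ∑ p ∈ Finset.univ.filter
            (fun p : Fin n × Fin n =>
              (p.1 < p.2 ∧ σ (τ p.2) < σ (τ p.1)) ∧ τ p.2 < τ p.1), a p.1 * a p.2 := by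
    rw [← Finset.sum_filter_add_sum_filter_not
      (Finset.univ.filter
        (fun p : Fin n × Fin n => p.1 < p.2 ∧ σ (τ p.2) < σ (τ p.1)))
      (fun p : Fin n × Fin n => τ p.1 < τ p.2)]
    congr 1
    · rw [Finset.filter_filter]
    · rw [Finset.filter_filter]
      refine Finset.sum_congr (Finset.filter_congr ?_) (fun _ _ => rfl)
      intro p _
      constructor
      · rintro ⟨h1, h2⟩
        have hne : τ p.1 ≠ τ p.2 := fun h => absurd h1.1 (by
          have := τ.injective h; rw [this]; exact lt_irrefl _)
        exact ⟨h1, (flip_lt hne).mp h2⟩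
      · rintro ⟨h1, h2⟩
        exact ⟨h1, fun h => absurd h (asymm h2)⟩
  -- split `Rf τ a` according to the relative order of `στ p.1`, `στ p.2`
  have hC : Rf n τ a
      = ∑ p ∈ Finset.univ.filter
            (fun p : Fin n × Fin n =>
              (p.1 < p.2 ∧ τ p.2 < τ p.1) ∧ σ (τ p.1) < σ (τ p.2)), a p.1 * a p.2
        + ∑ p ∈ Finset.univ.filter
            (fun p : Fin n × Fin n =>
              (p.1 < p.2 ∧ σ (τ p.2) < σ (τ p.1)) ∧ τ p.2 < τ p.1), a p.1 * a p.2 := by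
    rw [Rf, ← Finset.sum_filter_add_sum_filter_not
      (Finset.univ.filter
        (fun p : Fin n × Fin n => p.1 < p.2 ∧ τ p.2 < τ p.1))
      (fun p : Fin n × Fin n => σ (τ p.1) < σ (τ p.2))]
    congr 1
    · rw [Finset.filter_filter]
    · rw [Finset.filter_filter]
      refine Finset.sum_congr (Finset.filter_congr ?_) (fun _ _ => rfl)
      intro p _
      constructor
      · rintro ⟨h1, h2⟩
        have hne : σ (τ p.1) ≠ σ (τ p.2) := fun h => absurd h1.2 (by
          have := σ.injective h; rw [this]; exact lt_irrefl _)
        exact ⟨⟨h1.1, (flip_lt hne).mp h2⟩, h1.2⟩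
      · rintro ⟨h1, h2⟩
        exact ⟨⟨h1.1, h2⟩, fun h => absurd h (asymm h1.2)⟩
  -- reindex `Rf σ (a ∘ τ.symm)` and split according to the order of `p.1`, `p.2`
  have hD : Rf n σ (a ∘ τ.symm)
      = ∑ p ∈ Finset.univ.filter
          (fun p : Fin n × Fin n => τ p.1 < τ p.2 ∧ σ (τ p.2) < σ (τ p.1)),
            a p.1 * a p.2 := by
    rw [Rf]
    apply Finset.sum_equiv (Equiv.prodCongr τ.symm τ.symm) <;> simp
  have hE : ∑ p ∈ Finset.univ.filter
        (fun p : Fin n × Fin n => τ p.1 < τ p.2 ∧ σ (τ p.2) < σ (τ p.1)), a p.1 * a p.2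
      = ∑ p ∈ Finset.univ.filter
            (fun p : Fin n × Fin n =>
              (p.1 < p.2 ∧ σ (τ p.2) < σ (τ p.1)) ∧ τ p.1 < τ p.2), a p.1 * a p.2
        + ∑ p ∈ Finset.univ.filter
            (fun p : Fin n × Fin n =>
              (τ p.1 < τ p.2 ∧ σ (τ p.2) < σ (τ p.1)) ∧ p.2 < p.1), a p.1 * a p.2 := by
    rw [← Finset.sum_filter_add_sum_filter_not
      (Finset.univ.filter
        (fun p : Fin n × Fin n => τ p.1 < τ p.2 ∧ σ (τ p.2) < σ (τ p.1)))
      (fun p : Fin n × Fin n => p.1 < p.2)]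
    congr 1
    · rw [Finset.filter_filter]
      refine Finset.sum_congr (Finset.filter_congr ?_) (fun _ _ => rfl)
      intro p _
      exact ⟨fun h => ⟨⟨h.2, h.1.2⟩, h.1.1⟩, fun h => ⟨⟨h.2, h.1.2⟩, h.1.1⟩⟩
    · rw [Finset.filter_filter]
      refine Finset.sum_congr (Finset.filter_congr ?_) (fun _ _ => rfl)
      intro p _
      constructor
      · rintro ⟨h1, h2⟩
        have hne : p.1 ≠ p.2 := fun h => absurd h1.1 (by rw [h]; exact lt_irrefl _)
        exact ⟨h1, (flip_lt hne).mp h2⟩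
      · rintro ⟨h1, h2⟩
        exact ⟨h1, fun h => absurd h (asymm h2)⟩
  -- swap the second piece of `hE`
  have hF : ∑ p ∈ Finset.univ.filter
        (fun p : Fin n × Fin n =>
          (τ p.1 < τ p.2 ∧ σ (τ p.2) < σ (τ p.1)) ∧ p.2 < p.1), a p.1 * a p.2
      = ∑ p ∈ Finset.univ.filter
            (fun p : Fin n × Fin n =>
              (p.1 < p.2 ∧ τ p.2 < τ p.1) ∧ σ (τ p.1) < σ (τ p.2)), a p.1 * a p.2 := by
    rw [sum_pair_swap
      (fun p : Fin n × Fin n => (τ p.1 < τ p.2 ∧ σ (τ p.2) < σ (τ p.1)) ∧ p.2 < p.1)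
      (fun i j => a i * a j)]
    refine Finset.sum_congr (Finset.filter_congr ?_) ?_
    · intro p _
      exact ⟨fun h => ⟨⟨h.2, h.1.1⟩, h.1.2⟩, fun h => ⟨⟨h.1.2, h.2⟩, h.1.1⟩⟩
    · intro p _; ring
  rw [hA, hB, hC, hD, hE, hF]
  have h6 := two_cancel (∑ p ∈ Finset.univ.filter
      (fun p : Fin n × Fin n =>
        (p.1 < p.2 ∧ τ p.2 < τ p.1) ∧ σ (τ p.1) < σ (τ p.2)), a p.1 * a p.2)
  linear_combination -h6

end Lemmas3

/-- The group `G n = H n ⋊ Sₙ` (the semidirect product for the action `actH`). -/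
@[ext] structure G (n : ℕ) where
  h : H n
  s : Equiv.Perm (Fin n)

section ActLemmas

open Finset Equiv

variable {n : ℕ}

private lemma actH_mul (σ : Equiv.Perm (Fin n)) (g h : H n) :
    actH n σ (g * h) = actH n σ g * actH n σ h := by
  refine H.ext ?_ ?_
  · funext i; rfl
  · show (g.b + h.b + Qf n g.a h.a) + Rf n σ (g.a + h.a)
       = (g.b + Rf n σ g.a) + (h.b + Rf n σ h.a) + Qf n (g.a ∘ σ.symm) (h.a ∘ σ.symm)
    rw [Rf_add, Qf_act]
    ring

private lemma actH_one_perm (g : H n) : actH n (1 : Equiv.Perm (Fin n)) g = g := by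
  refine H.ext ?_ ?_
  · funext i; rfl
  · show g.b + Rf n 1 g.a = g.b
    have h0 : Rf n (1 : Equiv.Perm (Fin n)) g.a = 0 := by
      rw [Rf, Finset.filter_false_of_mem, Finset.sum_empty]
      rintro p _ ⟨h1, h2⟩
      exact absurd h2 (asymm h1)
    rw [h0, add_zero]

private lemma actH_H_one (σ : Equiv.Perm (Fin n)) : actH n σ (1 : H n) = 1 := by
  refine H.ext ?_ ?_
  · funext i; rfl
  · show (0 : ZMod 2) + Rf n σ (0 : Fin n → ZMod 2) = 0
    simp [Rf]

private lemma actH_comp (σ τ : Equiv.Perm (Fin n)) (g : H n) :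
    actH n (σ * τ) g = actH n σ (actH n τ g) := by
  refine H.ext ?_ ?_
  · funext i; rfl
  · show g.b + Rf n (σ * τ) g.a = (g.b + Rf n τ g.a) + Rf n σ (g.a ∘ τ.symm)
    rw [Rf_comp]
    ring

end ActLemmas

namespace G

variable {n : ℕ}

instance : Mul (G n) := ⟨fun x y => ⟨x.h * actH n x.s y.h, x.s * y.s⟩⟩
instance : One (G n) := ⟨⟨1, 1⟩⟩
instance : Inv (G n) := ⟨fun x => ⟨actH n x.s⁻¹ x.h⁻¹, x.s⁻¹⟩⟩

@[simp] lemma mul_h (x y : G n) : (x * y).h = x.h * actH n x.s y.h := rfl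
@[simp] lemma mul_s (x y : G n) : (x * y).s = x.s * y.s := rfl
@[simp] lemma one_h : (1 : G n).h = 1 := rfl
@[simp] lemma one_s : (1 : G n).s = 1 := rfl

instance : Group (G n) where
  mul_assoc x y z := by
    refine G.ext ?_ ?_
    · show (x.h * actH n x.s y.h) * actH n (x.s * y.s) z.h
         = x.h * actH n x.s (y.h * actH n y.s z.h)
      rw [actH_mul, ← actH_comp]
      exact mul_assoc _ _ _
    · exact mul_assoc x.s y.s z.s
  one_mul x := by
    refine G.ext ?_ ?_
    · show (1 : H n) * actH n 1 x.h = x.h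
      rw [actH_one_perm, one_mul]
    · exact one_mul x.s
  mul_one x := by
    refine G.ext ?_ ?_
    · show x.h * actH n x.s 1 = x.h
      rw [actH_H_one, mul_one]
    · exact mul_one x.s
  inv_mul_cancel x := by
    refine G.ext ?_ ?_
    · show actH n x.s⁻¹ x.h⁻¹ * actH n x.s⁻¹ x.h = 1
      rw [← actH_mul, inv_mul_cancel, actH_H_one]
    · exact inv_mul_cancel x.s

end G

/-- The hyperoctahedral group `B n = (ZMod 2)ⁿ ⋊ Sₙ`, with
`(a₁, π₁) * (a₂, π₂) = (a₁ + a₂ ∘ π₁⁻¹, π₁ * π₂)`. -/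
@[ext] structure B (n : ℕ) where
  a : Fin n → ZMod 2
  s : Equiv.Perm (Fin n)

namespace B

variable {n : ℕ}

instance : Mul (B n) := ⟨fun x y => ⟨x.a + y.a ∘ x.s.symm, x.s * y.s⟩⟩
instance : One (B n) := ⟨⟨0, 1⟩⟩
instance : Inv (B n) := ⟨fun x => ⟨x.a ∘ x.s, x.s⁻¹⟩⟩

@[simp] lemma mul_a (x y : B n) : (x * y).a = x.a + y.a ∘ x.s.symm := rfl
@[simp] lemma mul_s (x y : B n) : (x * y).s = x.s * y.s := rfl
@[simp] lemma one_a : (1 : B n).a = 0 := rfl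
@[simp] lemma one_s : (1 : B n).s = 1 := rfl

instance : Group (B n) where
  mul_assoc x y z := by
    refine B.ext ?_ ?_
    · funext i
      show x.a i + y.a (x.s.symm i) + z.a (y.s.symm (x.s.symm i))
         = x.a i + (y.a (x.s.symm i) + z.a (y.s.symm (x.s.symm i)))
      exact add_assoc _ _ _
    · exact mul_assoc x.s y.s z.s
  one_mul x := by
    refine B.ext ?_ ?_
    · funext i
      show (0 : ZMod 2) + x.a i = x.a i
      exact zero_add _
    · exact one_mul x.s
  mul_one x := by
    refine B.ext ?_ ?_
    · funext i
      show x.a i + (0 : ZMod 2) = x.a i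
      exact add_zero _
    · exact mul_one x.s
  inv_mul_cancel x := by
    refine B.ext ?_ ?_
    · funext i
      show x.a (x.s i) + x.a ((x.s⁻¹).symm i) = 0
      have h : (x.s⁻¹).symm i = x.s i := rfl
      rw [h]
      generalize x.a (x.s i) = u; revert u; decide
    · exact inv_mul_cancel x.s

end B

/-- The projection `p : G n → B n`, `((a, b), σ) ↦ (a, σ)`. -/
def pG (n : ℕ) (g : G n) : B n := ⟨g.h.a, g.s⟩

/-- The central element `ε̂ = ((0,1), 1)` of `G n`. -/
def epsG (n : ℕ) : G n := ⟨⟨0, 1⟩, 1⟩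

/-- The orbit of `k` under the cyclic group generated by `σ`, as a `Finset`. -/
noncomputable def orb (n : ℕ) (σ : Equiv.Perm (Fin n)) (k : Fin n) : Finset (Fin n) :=
  letI := Classical.decPred fun j : Fin n => ∃ m : ℤ, (σ ^ m) k = j
  Finset.univ.filter (fun j => ∃ m : ℤ, (σ ^ m) k = j)

/-- The set of orbits of `σ` on `Fin n`. -/
noncomputable def orbs (n : ℕ) (σ : Equiv.Perm (Fin n)) : Finset (Finset (Fin n)) :=
  Finset.univ.image (orb n σ)

/-- The orbit of `k` under the group generated by the commuting permutations `σ` and `π`;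
it is the union of the `σ`-orbits belonging to the orbit (under the action of the group
generated by `π` on the set of `σ`-orbits) of the `σ`-orbit of `k`. -/
noncomputable def orb2 (n : ℕ) (σ π : Equiv.Perm (Fin n)) (k : Fin n) : Finset (Fin n) :=
  letI := Classical.decPred fun j : Fin n => ∃ a b : ℤ, (σ ^ a * π ^ b) k = j
  Finset.univ.filter (fun j => ∃ a b : ℤ, (σ ^ a * π ^ b) k = j)

/-- The set of orbits of the group generated by `σ` and `π` on `Fin n`. -/
noncomputable def orbs2 (n : ℕ) (σ π : Equiv.Perm (Fin n)) : Finset (Finset (Fin n)) :=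
  Finset.univ.image (orb2 n σ π)

open scoped commutatorElement

section PhiAux

open Finset Equiv

variable {n : ℕ}

private lemma zmod2_cases : ∀ x : ZMod 2, x = 0 ∨ x = 1 := by decide

private lemma Rf_zero_vec (σ : Equiv.Perm (Fin n)) : Rf n σ (0 : Fin n → ZMod 2) = 0 := by
  simp [Rf]

private lemma Rf_one_perm (a : Fin n → ZMod 2) : Rf n (1 : Equiv.Perm (Fin n)) a = 0 := by
  rw [Rf, Finset.filter_false_of_mem, Finset.sum_empty]
  rintro p _ ⟨h1, h2⟩
  exact absurd h2 (asymm h1)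

private lemma one_comp (g : Fin n → Fin n) :
    (fun _ : Fin n => (1 : ZMod 2)) ∘ g = fun _ => 1 := rfl

private lemma nu_mul (σ τ : Equiv.Perm (Fin n)) :
    Rf n (σ * τ) (fun _ => 1) = Rf n σ (fun _ => 1) + Rf n τ (fun _ => 1) := by
  rw [Rf_comp, one_comp]
  exact add_comm _ _

private lemma nu_inv (σ : Equiv.Perm (Fin n)) :
    Rf n σ⁻¹ (fun _ => 1) = Rf n σ (fun _ => 1) := by
  have h := nu_mul σ σ⁻¹
  rw [mul_inv_cancel, Rf_one_perm] at h
  have h2 := two_cancel (Rf n σ (fun _ => (1 : ZMod 2)))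
  linear_combination -h - h2

private lemma nu_conj (π σ : Equiv.Perm (Fin n)) :
    Rf n (π * σ * π⁻¹) (fun _ => 1) = Rf n σ (fun _ => 1) := by
  rw [nu_mul, nu_mul, nu_inv]
  have h2 := two_cancel (Rf n π (fun _ => (1 : ZMod 2)))
  linear_combination h2

private lemma nu_swap01 (h2 : 2 ≤ n) :
    Rf n (Equiv.swap (⟨0, by omega⟩ : Fin n) ⟨1, by omega⟩) (fun _ => 1) = 1 := by
  have hset : Finset.univ.filter
      (fun p : Fin n × Fin n => p.1 < p.2 ∧
        Equiv.swap (⟨0, by omega⟩ : Fin n) ⟨1, by omega⟩ p.2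
          < Equiv.swap (⟨0, by omega⟩ : Fin n) ⟨1, by omega⟩ p.1)
      = {((⟨0, by omega⟩ : Fin n), (⟨1, by omega⟩ : Fin n))} := by
    ext p
    simp only [Finset.mem_filter, Finset.mem_univ, true_and, Finset.mem_singleton]
    rw [Equiv.swap_apply_def, Equiv.swap_apply_def]
    constructor
    · rintro ⟨hlt, hs⟩
      rw [Prod.ext_iff]
      split_ifs at hs <;>
        simp only [Fin.ext_iff, Fin.lt_def] at * <;> omega
    · rintro rfl
      simp only [Fin.ext_iff, Fin.lt_def]
      split_ifs <;> simp_all [Fin.ext_iff, Fin.lt_def] <;> omega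
  rw [Rf, hset, Finset.sum_singleton, one_mul]

private lemma nu_swap (x y : Fin n) (hxy : x ≠ y) :
    Rf n (Equiv.swap x y) (fun _ => 1) = 1 := by
  have hval : (x : ℕ) ≠ (y : ℕ) := fun h => hxy (Fin.ext h)
  have h2 : 2 ≤ n := by have := x.2; have := y.2; omega
  have hne : (⟨0, by omega⟩ : Fin n) ≠ ⟨1, by omega⟩ := by
    simp [Fin.ext_iff]
  obtain ⟨π, hπ⟩ := isConj_iff.mp (Equiv.Perm.isConj_swap hne hxy)
  rw [← hπ, nu_conj, nu_swap01 h2]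

private lemma nu_cycle (k : ℕ) : ∀ (f : Fin k → Fin n) (hk : 0 < k),
    Function.Injective f →
    ∀ c : Equiv.Perm (Fin n),
    (∀ r : Fin k, c (f r) = f ⟨((r : ℕ) + 1) % k, Nat.mod_lt _ hk⟩) →
    (∀ j : Fin n, j ∉ Set.range f → c j = j) →
    Rf n c (fun _ => 1) = (k : ZMod 2) + 1 := by
  induction k with
  | zero => intro f hk; omega
  | succ k ih =>
    intro f hk hf c hc hc'
    rcases Nat.eq_zero_or_pos k with hk0 | hkpos
    · subst hk0
      have hc1 : c = 1 := by
        refine Equiv.ext fun j => ?_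
        rw [Equiv.Perm.one_apply]
        by_cases hj : j ∈ Set.range f
        · obtain ⟨r, rfl⟩ := hj
          have hr : r = 0 := Fin.ext (by have := r.2; simp only [Fin.val_zero]; omega)
          subst hr
          have h := hc 0
          have h0 : (⟨(((0 : Fin (0 + 1)) : ℕ) + 1) % (0 + 1), Nat.mod_lt _ hk⟩ :
              Fin (0 + 1)) = 0 := Fin.ext (by simp)
          exact h.trans (congrArg f h0)
        · exact hc' j hj
      rw [hc1, Rf_one_perm]
      decide
    · set x0 : Fin n := f 0 with hx0
      set x1 : Fin n := f ⟨1, by omega⟩ with hx1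
      have hne : x0 ≠ x1 := by
        intro h
        have h' := hf h
        rw [Fin.ext_iff] at h'
        simp at h'
      set g : Fin k → Fin n := fun r => f r.succ with hg
      set d : Equiv.Perm (Fin n) := Equiv.swap x0 x1 * c with hd
      have hginj : Function.Injective g := fun r s h => by
        have := hf h
        exact Fin.succ_injective _ this
      have hgc : ∀ r : Fin k, d (g r) = g ⟨((r : ℕ) + 1) % k, Nat.mod_lt _ hkpos⟩ := by
        intro r
        have hcr := hc r.succ
        simp only [hd, hg, Equiv.Perm.mul_apply]
        rcases Nat.lt_or_ge ((r : ℕ) + 1) k with hlt | hge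
        · have hcr2 : c (f r.succ) = f ⟨(r : ℕ) + 2, by omega⟩ := by
            rw [hcr]
            congr 1
            refine Fin.ext ?_
            simp only [Fin.val_succ]
            rw [Nat.mod_eq_of_lt (by omega)]
          have h1 : f ⟨(r : ℕ) + 2, by omega⟩ ≠ x0 := by
            intro h
            rw [hx0] at h
            have h' := hf h
            rw [Fin.ext_iff] at h'
            simp at h'
          have h2 : f ⟨(r : ℕ) + 2, by omega⟩ ≠ x1 := by
            intro h
            rw [hx1] at h
            have h' := hf h
            rw [Fin.ext_iff] at h'
            simp at h'
          rw [hcr2, Equiv.swap_apply_of_ne_of_ne h1 h2]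
          congr 1
          refine Fin.ext ?_
          simp only [Fin.val_succ]
          rw [Nat.mod_eq_of_lt hlt]
        · have hrk : (r : ℕ) + 1 = k := by have := r.2; omega
          have hcr2 : c (f r.succ) = f 0 := by
            rw [hcr]
            congr 1
            refine Fin.ext ?_
            simp only [Fin.val_succ, Fin.val_zero]
            rw [hrk, Nat.mod_self]
          rw [hcr2, ← hx0, Equiv.swap_apply_left, hx1]
          congr 1
          refine Fin.ext ?_
          simp only [Fin.val_succ]
          rw [hrk, Nat.mod_self]
      have hgc' : ∀ j : Fin n, j ∉ Set.range g → d j = j := by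
        intro j hj
        by_cases hjf : j ∈ Set.range f
        · obtain ⟨r, rfl⟩ := hjf
          rcases Fin.eq_zero_or_eq_succ r with hr0 | ⟨s, rfl⟩
          · subst hr0
            simp only [hd, Equiv.Perm.mul_apply]
            have h := hc 0
            have h0 : (⟨(((0 : Fin (k + 1)) : ℕ) + 1) % (k + 1), Nat.mod_lt _ hk⟩ :
                Fin (k + 1)) = ⟨1, by omega⟩ := by
              refine Fin.ext ?_
              simp only [Fin.val_zero]
              exact Nat.mod_eq_of_lt (by omega)
            rw [h.trans (congrArg f h0), ← hx1, Equiv.swap_apply_right, hx0]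
          · exact absurd ⟨s, rfl⟩ hj
        · simp only [hd, Equiv.Perm.mul_apply]
          rw [hc' j hjf]
          have hj0 : j ≠ x0 := fun h => hjf ⟨0, h.symm⟩
          have hj1 : j ≠ x1 := fun h => hjf ⟨⟨1, by omega⟩, h.symm⟩
          exact Equiv.swap_apply_of_ne_of_ne hj0 hj1
      have hIH := ih g hkpos hginj d hgc hgc'
      have hcd : c = Equiv.swap x0 x1 * d := by
        rw [hd, ← mul_assoc, Equiv.swap_mul_self, one_mul]
      rw [hcd, nu_mul, nu_swap _ _ hne, hIH]
      push_cast
      ring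

private lemma pointwise1 (c : Equiv.Perm (Fin n)) (a : Fin n → ZMod 2)
    (hfix : ∀ j, a j = 0 → c j = j) (i j : Fin n) :
    (if i < j then (1 : ZMod 2) else 0) * (if c j < c i then (1 : ZMod 2) else 0)
        * (a i * a j + 1)
      = (if i < j then (1 : ZMod 2) else 0) * (if c j < c i then (1 : ZMod 2) else 0)
          * (a i * (a j + 1))
        + (if i < j then (1 : ZMod 2) else 0) * (if c j < c i then (1 : ZMod 2) else 0)
          * ((a i + 1) * a j) := by
  rcases zmod2_cases (a i) with hi | hi
  · rcases zmod2_cases (a j) with hj | hj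
    · by_cases hij : i < j
      · rw [hfix i hi, hfix j hj, if_neg (asymm hij)]
        ring
      · rw [if_neg hij]
        ring
    · rw [hi, hj]
      ring
  · rw [hi, show (1 : ZMod 2) + 1 = 0 from rfl]
    ring

private lemma pointwise2 (c : Equiv.Perm (Fin n)) (a : Fin n → ZMod 2)
    (hfix : ∀ j, a j = 0 → c j = j) (hstab : ∀ i, a (c i) = a i) (i j : Fin n) :
    (if i < j then (1 : ZMod 2) else 0) * (if c j < c i then (1 : ZMod 2) else 0)
        * (a i * (a j + 1))
      + (if j < i then (1 : ZMod 2) else 0) * (if c i < c j then (1 : ZMod 2) else 0)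
          * ((a j + 1) * a i)
    = a i * (a j + 1) *
        ((if i < j then (1 : ZMod 2) else 0) + (if c i < j then (1 : ZMod 2) else 0)) := by
  rcases zmod2_cases (a i) with hi | hi
  · rw [hi]; ring
  · rcases zmod2_cases (a j) with hj | hj
    · have hcj : c j = j := hfix j hj
      have hij : i ≠ j := by
        intro h
        rw [h, hj] at hi
        exact absurd hi (by decide)
      have hci : c i ≠ j := by
        intro h
        have hs := hstab i
        rw [h, hj, hi] at hs
        exact absurd hs (by decide)
      rw [hcj, hi, hj]
      by_cases h1 : i < j <;> by_cases h2 : c i < j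
      · rw [if_pos h1, if_neg (asymm h2), if_neg (asymm h1), if_pos h2]
        decide
      · have h3 : j < c i := (flip_lt hci).mp h2
        rw [if_pos h1, if_pos h3, if_neg (asymm h1), if_neg h2]
        decide
      · have h3 : j < i := (flip_lt hij).mp h1
        rw [if_neg h1, if_pos h3, if_pos h2, if_neg (asymm h2)]
        decide
      · have h3 : j < i := (flip_lt hij).mp h1
        have h4 : j < c i := (flip_lt hci).mp h2
        rw [if_neg h1, if_pos h3, if_pos h4, if_neg h2]
        decide
    · rw [hj, show (1 : ZMod 2) + 1 = 0 from rfl]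
      ring

private lemma Rf_indicator (c : Equiv.Perm (Fin n)) (a : Fin n → ZMod 2)
    (hfix : ∀ j, a j = 0 → c j = j) (hstab : ∀ i, a (c i) = a i) :
    Rf n c a = Rf n c (fun _ => 1) := by
  have hexp : ∀ b : Fin n → ZMod 2, Rf n c b
      = ∑ p : Fin n × Fin n,
          (if p.1 < p.2 then (1 : ZMod 2) else 0) * (if c p.2 < c p.1 then (1 : ZMod 2) else 0)
            * (b p.1 * b p.2) := by
    intro b
    rw [Rf, Finset.sum_filter]
    refine Finset.sum_congr rfl fun p _ => ?_
    by_cases h1 : p.1 < p.2 <;> by_cases h2 : c p.2 < c p.1 <;> simp [h1, h2]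
  have hstab' : ∀ i, a (c.symm i) = a i := fun i => by
    have h := hstab (c.symm i)
    rw [Equiv.apply_symm_apply] at h
    exact h.symm
  have key : Rf n c a + Rf n c (fun _ => 1) = 0 := by
    rw [hexp, hexp, ← Finset.sum_add_distrib]
    have step1 : ∑ p : Fin n × Fin n,
        ((if p.1 < p.2 then (1 : ZMod 2) else 0) * (if c p.2 < c p.1 then (1 : ZMod 2) else 0)
            * (a p.1 * a p.2)
          + (if p.1 < p.2 then (1 : ZMod 2) else 0) * (if c p.2 < c p.1 then (1 : ZMod 2) else 0)
            * ((fun _ : Fin n => (1 : ZMod 2)) p.1 * (fun _ : Fin n => (1 : ZMod 2)) p.2))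
      = ∑ p : Fin n × Fin n,
          ((if p.1 < p.2 then (1 : ZMod 2) else 0) * (if c p.2 < c p.1 then (1 : ZMod 2) else 0)
              * (a p.1 * (a p.2 + 1))
            + (if p.1 < p.2 then (1 : ZMod 2) else 0)
              * (if c p.2 < c p.1 then (1 : ZMod 2) else 0) * ((a p.1 + 1) * a p.2)) := by
      refine Finset.sum_congr rfl fun p _ => ?_
      rw [← pointwise1 c a hfix p.1 p.2]
      ring
    rw [step1, Finset.sum_add_distrib]
    have step2 : ∑ p : Fin n × Fin n,
        (if p.1 < p.2 then (1 : ZMod 2) else 0) * (if c p.2 < c p.1 then (1 : ZMod 2) else 0)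
          * ((a p.1 + 1) * a p.2)
      = ∑ p : Fin n × Fin n,
          (if p.2 < p.1 then (1 : ZMod 2) else 0) * (if c p.1 < c p.2 then (1 : ZMod 2) else 0)
            * ((a p.2 + 1) * a p.1) := by
      exact Fintype.sum_equiv (Equiv.prodComm _ _) _ _ (fun p => rfl)
    rw [step2, ← Finset.sum_add_distrib]
    have step3 : ∑ p : Fin n × Fin n,
        ((if p.1 < p.2 then (1 : ZMod 2) else 0) * (if c p.2 < c p.1 then (1 : ZMod 2) else 0)
            * (a p.1 * (a p.2 + 1))
          + (if p.2 < p.1 then (1 : ZMod 2) else 0) * (if c p.1 < c p.2 then (1 : ZMod 2) else 0)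
            * ((a p.2 + 1) * a p.1))
      = ∑ p : Fin n × Fin n,
          (a p.1 * (a p.2 + 1) * (if p.1 < p.2 then (1 : ZMod 2) else 0)
            + a p.1 * (a p.2 + 1) * (if c p.1 < p.2 then (1 : ZMod 2) else 0)) := by
      refine Finset.sum_congr rfl fun p _ => ?_
      rw [pointwise2 c a hfix hstab p.1 p.2]
      ring
    rw [step3, Finset.sum_add_distrib]
    have step4 : ∑ p : Fin n × Fin n,
        a p.1 * (a p.2 + 1) * (if p.1 < p.2 then (1 : ZMod 2) else 0)
      = ∑ p : Fin n × Fin n,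
          a p.1 * (a p.2 + 1) * (if c p.1 < p.2 then (1 : ZMod 2) else 0) := by
      refine Fintype.sum_equiv (Equiv.prodCongr c.symm (Equiv.refl _)) _ _ (fun p => ?_)
      simp only [Equiv.prodCongr_apply, Prod.map, Equiv.refl_apply,
        Equiv.apply_symm_apply, hstab']
    rw [← step4, ← Finset.sum_add_distrib]
    refine Finset.sum_eq_zero fun p _ => two_cancel _
  have h2 := two_cancel (Rf n c (fun _ => (1 : ZMod 2)))
  linear_combination key - h2

private lemma epsG_pow (m : ℕ) : epsG n ^ m = ⟨⟨0, (m : ZMod 2)⟩, 1⟩ := by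
  induction m with
  | zero =>
    rw [pow_zero]
    refine G.ext (H.ext rfl ?_) rfl
    show (0 : ZMod 2) = ((0 : ℕ) : ZMod 2)
    simp
  | succ m ih =>
    rw [pow_succ, ih]
    have hmul : (⟨⟨0, (m : ZMod 2)⟩, 1⟩ : G n) * epsG n
        = ⟨(⟨0, (m : ZMod 2)⟩ : H n) * actH n 1 ⟨0, 1⟩, 1 * 1⟩ := rfl
    rw [hmul, actH_one_perm]
    refine G.ext (H.ext ?_ ?_) ?_
    · show (0 : Fin n → ZMod 2) + 0 = 0
      simp
    · show (m : ZMod 2) + 1 + Qf n 0 0 = ((m + 1 : ℕ) : ZMod 2)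
      rw [H.Qf_zero_left, add_zero]
      push_cast
      ring
    · show (1 : Equiv.Perm (Fin n)) * 1 = 1
      rw [one_mul]

private lemma comm_formula (s : Equiv.Perm (Fin n)) (a : Fin n → ZMod 2) (b1 b2 : ZMod 2)
    (hst : a ∘ s.symm = a) :
    ⁅(⟨⟨0, b1⟩, s⟩ : G n), (⟨⟨a, b2⟩, 1⟩ : G n)⁆ = ⟨⟨0, Rf n s a⟩, 1⟩ := by
  have e1 : (⟨⟨0, b1⟩, s⟩ : G n) * ⟨⟨a, b2⟩, 1⟩ = ⟨⟨a, b1 + b2 + Rf n s a⟩, s⟩ := by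
    refine G.ext (H.ext ?_ ?_) ?_
    · show (0 : Fin n → ZMod 2) + a ∘ s.symm = a
      rw [zero_add, hst]
    · show b1 + (b2 + Rf n s a) + Qf n 0 (a ∘ s.symm) = b1 + b2 + Rf n s a
      rw [H.Qf_zero_left, add_zero, add_assoc]
    · show s * 1 = s
      rw [mul_one]
  have e2 : (⟨⟨a, b1 + b2 + Rf n s a⟩, s⟩ : G n) * (⟨⟨0, b1⟩, s⟩ : G n)⁻¹
      = ⟨⟨a, b2 + Rf n s a⟩, 1⟩ := by
    have hinv : ((⟨⟨0, b1⟩, s⟩ : G n)⁻¹) = ⟨actH n s⁻¹ (⟨0, b1⟩ : H n)⁻¹, s⁻¹⟩ := rfl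
    rw [hinv]
    have hmul : (⟨⟨a, b1 + b2 + Rf n s a⟩, s⟩ : G n) * ⟨actH n s⁻¹ (⟨0, b1⟩ : H n)⁻¹, s⁻¹⟩
        = ⟨(⟨a, b1 + b2 + Rf n s a⟩ : H n) * actH n s (actH n s⁻¹ (⟨0, b1⟩ : H n)⁻¹),
            s * s⁻¹⟩ := rfl
    rw [hmul, ← actH_comp, mul_inv_cancel, actH_one_perm]
    have hinvH : ((⟨0, b1⟩ : H n)⁻¹) = (⟨0, b1⟩ : H n) := by
      refine H.ext rfl ?_
      show b1 + Qf n 0 0 = b1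
      rw [H.Qf_zero_left, add_zero]
    rw [hinvH]
    refine G.ext (H.ext ?_ ?_) rfl
    · show a + 0 = a
      rw [add_zero]
    · show b1 + b2 + Rf n s a + b1 + Qf n a 0 = b2 + Rf n s a
      rw [H.Qf_zero_right, add_zero]
      linear_combination two_cancel b1
  have e3 : (⟨⟨a, b2 + Rf n s a⟩, 1⟩ : G n) * (⟨⟨a, b2⟩, 1⟩ : G n)⁻¹
      = ⟨⟨0, Rf n s a⟩, 1⟩ := by
    have hinv : ((⟨⟨a, b2⟩, 1⟩ : G n)⁻¹)
        = ⟨actH n (1 : Equiv.Perm (Fin n))⁻¹ (⟨a, b2⟩ : H n)⁻¹, 1⁻¹⟩ := rfl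
    rw [hinv, inv_one, actH_one_perm]
    have hmul : (⟨⟨a, b2 + Rf n s a⟩, 1⟩ : G n) * ⟨(⟨a, b2⟩ : H n)⁻¹, 1⟩
        = ⟨(⟨a, b2 + Rf n s a⟩ : H n) * actH n 1 ((⟨a, b2⟩ : H n)⁻¹), 1 * 1⟩ := rfl
    rw [hmul, actH_one_perm]
    refine G.ext (H.ext ?_ ?_) ?_
    · show a + a = 0
      funext i
      exact two_cancel (a i)
    · show b2 + Rf n s a + (b2 + Qf n a a) + Qf n a a = Rf n s a
      linear_combination two_cancel b2 + two_cancel (Qf n a a)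
    · show (1 : Equiv.Perm (Fin n)) * 1 = 1
      rw [one_mul]
  rw [commutatorElement_def, e1, e2, e3]

end PhiAux

/-- For a `k`-cycle `c = (i₁ … i_k) ∈ Sₙ` on distinct indices `i₁, …, i_k` (encoded by
an injective `f : Fin k → Fin n`), `σ = (0, c)` and `τ = (e_{i₁} + ⋯ + e_{i_k}, 1)`
commute in `B n`, and `φ(σ, τ) = ε̂^(k−1)`. -/
theorem phi_of_cycle (n : ℕ) (hn : 0 < n) (k : ℕ) (hk : 0 < k)
    (f : Fin k → Fin n) (hf : Function.Injective f)
    (c : Equiv.Perm (Fin n))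
    (hc : ∀ r : Fin k, c (f r) = f ⟨((r : ℕ) + 1) % k, Nat.mod_lt _ hk⟩)
    (hc' : ∀ j : Fin n, j ∉ Set.range f → c j = j)
    (σ τ : B n) (hσ : σ = ⟨0, c⟩) (hτ : τ = ⟨∑ r : Fin k, Pi.single (f r) 1, 1⟩)
    (σt τt : G n) (hσt : pG n σt = σ) (hτt : pG n τt = τ) :
    Commute σ τ ∧ ⁅σt, τt⁆ = epsG n ^ (k - 1) := by
  set aF : Fin n → ZMod 2 := ∑ r : Fin k, Pi.single (f r) 1 with haF
  subst hσ hτ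
  obtain ⟨⟨sa, sb⟩, ss⟩ := σt
  obtain ⟨⟨ta, tb⟩, ts⟩ := τt
  have hsa : sa = 0 := congrArg B.a hσt
  have hss : ss = c := congrArg B.s hσt
  have hta : ta = aF := congrArg B.a hτt
  have hts : ts = 1 := congrArg B.s hτt
  subst hsa hss hta hts
  have ha_mem : ∀ r0 : Fin k, aF (f r0) = 1 := by
    intro r0
    rw [haF, Finset.sum_apply]
    rw [Finset.sum_eq_single r0]
    · rw [Pi.single_eq_same]
    · intro r _ hr
      rw [Pi.single_apply, if_neg]
      intro h
      exact hr (hf h).symm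
    · intro h
      exact absurd (Finset.mem_univ r0) h
  have ha_not : ∀ j : Fin n, j ∉ Set.range f → aF j = 0 := by
    intro j hj
    rw [haF, Finset.sum_apply]
    refine Finset.sum_eq_zero fun r _ => ?_
    rw [Pi.single_apply, if_neg]
    intro h
    exact hj ⟨r, h.symm⟩
  have hstab : ∀ i, aF (ss i) = aF i := by
    intro i
    by_cases hi : i ∈ Set.range f
    · obtain ⟨r, rfl⟩ := hi
      rw [hc r, ha_mem, ha_mem]
    · rw [hc' i hi]
  have hfix : ∀ j, aF j = 0 → ss j = j := by
    intro j hj0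
    by_cases hjf : j ∈ Set.range f
    · obtain ⟨r, rfl⟩ := hjf
      rw [ha_mem r] at hj0
      exact absurd hj0 (by decide)
    · exact hc' j hjf
  have hstab_comp : aF ∘ ss.symm = aF := by
    funext i
    have h := hstab (ss.symm i)
    rw [Equiv.apply_symm_apply] at h
    exact h.symm
  constructor
  · show (⟨0, ss⟩ : B n) * ⟨aF, 1⟩ = (⟨aF, 1⟩ : B n) * ⟨0, ss⟩
    refine B.ext ?_ ?_
    · show (0 : Fin n → ZMod 2) + aF ∘ ss.symm
        = aF + (0 : Fin n → ZMod 2) ∘ ((1 : Equiv.Perm (Fin n)).symm)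
      rw [zero_add, hstab_comp]
      funext i
      show aF i = aF i + 0
      rw [add_zero]
    · show ss * 1 = 1 * ss
      rw [mul_one, one_mul]
  · rw [comm_formula ss aF sb tb hstab_comp, epsG_pow]
    refine G.ext (H.ext rfl ?_) rfl
    show Rf n ss aF = ((k - 1 : ℕ) : ZMod 2)
    rw [Rf_indicator ss aF hfix hstab, nu_cycle k f hk hf ss hc hc',
      Nat.cast_sub hk, Nat.cast_one, sub_eq_add_neg,
      show (-1 : ZMod 2) = 1 from rfl]
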